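/- Let ℓ ≥ 1 and k > ℓ be integers, and let u be a pre-gelation large-cluster solution on [0,T] with monodisperse k-mer initial conditions u_n(0) = 1 if n = k and u_n(0) = 0 otherwise, such that for every j ≥ 0 the moment series m_j(t) = ∑_{n>ℓ} n^j u_n(t) converges uniformly on [0,T]. Then for all t ∈ [0,T], the second moment is given by m₂(t) = (k − ℓt)(k² − 2kℓt + ℓ²t)/(k − 2kt + ℓt). -/

import Mathlib

open Finset Filter Topology

noncomputable section

/-- Total particle number for large clusters `m₁(t) = ∑_{i > ℓ} i u_i(t)`. -/
def m1large (ℓ : ℕ) (u : ℕ → ℝ → ℝ) (t : ℝ) : ℝ :=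
  ∑' i : ℕ, if ℓ + 1 ≤ i then (i : ℝ) * u i t else 0

/-- Right-hand side of the large-cluster equation for `u n` (`n > ℓ`):
`(1/m₁²) ∑_{i=ℓ+1}^{n−1} i(n+ℓ−i) u_i u_{n+ℓ−i} − 2 n u_n/m₁`
(the sum is empty when `n = ℓ+1`). -/
def largeRHS (ℓ : ℕ) (u : ℕ → ℝ → ℝ) (n : ℕ) (t : ℝ) : ℝ :=
  (1 / (m1large ℓ u t) ^ 2) *
      (∑ i ∈ Finset.Icc (ℓ + 1) (n - 1),
        (i : ℝ) * ((n + ℓ - i : ℕ) : ℝ) * u i t * u (n + ℓ - i) t)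
    - 2 * (n : ℝ) * u n t / m1large ℓ u t

/-- A large-cluster solution on `[0,T]`: a nonnegative family
`u_n ∈ C¹([0,T],[0,1])` (`n > ℓ`) solving the large-cluster system, whose
first-moment series converges uniformly on `[0,T]`. -/
structure IsLargeSolution (ℓ : ℕ) (T : ℝ) (u : ℕ → ℝ → ℝ) : Prop where
  mem : ∀ n, ℓ < n → ∀ t ∈ Set.Icc (0 : ℝ) T, u n t ∈ Set.Icc (0 : ℝ) 1
  contDiff : ∀ n, ℓ < n → ContDiffOn ℝ 1 (u n) (Set.Icc 0 T)
  ode : ∀ n, ℓ < n → ∀ t ∈ Set.Icc (0 : ℝ) T,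
    HasDerivWithinAt (u n) (largeRHS ℓ u n t) (Set.Icc 0 T) t
  m1_unif : TendstoUniformlyOn
    (fun N t => ∑ i ∈ Finset.range N, if ℓ + 1 ≤ i then (i : ℝ) * u i t else 0)
    (m1large ℓ u) atTop (Set.Icc 0 T)

/-- A pre-gelation large-cluster solution: in addition the second-moment series
`m₂(t) = ∑_{i > ℓ} i² u_i(t)` converges uniformly on `[0,T]`. -/
structure IsPreGelLargeSolution (ℓ : ℕ) (T : ℝ) (u : ℕ → ℝ → ℝ)
    extends IsLargeSolution ℓ T u : Prop where
  m2_unif : TendstoUniformlyOn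
    (fun N t => ∑ i ∈ Finset.range N, if ℓ + 1 ≤ i then (i : ℝ) ^ 2 * u i t else 0)
    (fun t => ∑' i : ℕ, if ℓ + 1 ≤ i then (i : ℝ) ^ 2 * u i t else 0)
    atTop (Set.Icc 0 T)

/-- The `j`-th moment of a large-cluster solution:
`m_j(t) = ∑_{n > ℓ} n^j u_n(t)`. -/
def largeMoment (ℓ : ℕ) (u : ℕ → ℝ → ℝ) (j : ℕ) (t : ℝ) : ℝ :=
  ∑' n : ℕ, if ℓ + 1 ≤ n then (n : ℝ) ^ j * u n t else 0



lemma tuo_comp_mono {F : ℕ → ℝ → ℝ} {f : ℝ → ℝ} {s : Set ℝ}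
    (h : TendstoUniformlyOn F f atTop s) {m : ℕ → ℕ} (hm : Tendsto m atTop atTop) :
    TendstoUniformlyOn (fun N => F (m N)) f atTop s :=
  fun v hv => hm.eventually (h v hv)

lemma tuo_mul {F G : ℕ → ℝ → ℝ} {f g : ℝ → ℝ} {s : Set ℝ} {C : ℝ} (hC0 : 0 ≤ C)
    (hF : TendstoUniformlyOn F f atTop s) (hG : TendstoUniformlyOn G g atTop s)
    (hFb : ∀ N, ∀ t ∈ s, |F N t| ≤ C) (hgb : ∀ t ∈ s, |g t| ≤ C) :
    TendstoUniformlyOn (fun N t => F N t * G N t) (fun t => f t * g t) atTop s := by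
  rw [Metric.tendstoUniformlyOn_iff] at hF hG ⊢
  intro ε hε
  have hC : (0:ℝ) < C + 1 := by linarith
  filter_upwards [hF (ε / (2 * (C + 1))) (by positivity),
    hG (ε / (2 * (C + 1))) (by positivity)] with N h1 h2 t ht
  have e1 := h1 t ht
  have e2 := h2 t ht
  rw [Real.dist_eq] at e1 e2 ⊢
  have key : f t * g t - F N t * G N t = (f t - F N t) * g t + F N t * (g t - G N t) := by ring
  have hg := (hgb t ht).trans (by linarith : C ≤ C + 1)
  have hf := (hFb N t ht).trans (by linarith : C ≤ C + 1)
  calc |f t * g t - F N t * G N t| ≤ |(f t - F N t) * g t| + |F N t * (g t - G N t)| := by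
        rw [key]; exact abs_add_le _ _
    _ = |f t - F N t| * |g t| + |F N t| * |g t - G N t| := by rw [abs_mul, abs_mul]
    _ ≤ |f t - F N t| * (C + 1) + (C + 1) * |g t - G N t| := by
        apply add_le_add
        · exact mul_le_mul_of_nonneg_left hg (abs_nonneg _)
        · exact mul_le_mul_of_nonneg_right hf (abs_nonneg _)
    _ < (ε / (2 * (C + 1))) * (C + 1) + (C + 1) * (ε / (2 * (C + 1))) := by
        apply add_lt_add
        · exact mul_lt_mul_of_pos_right e1 hC
        · exact mul_lt_mul_of_pos_left e2 hC
    _ = ε := by field_simp; ring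

lemma tuo_squeeze {A L U : ℕ → ℝ → ℝ} {g : ℝ → ℝ} {s : Set ℝ}
    (hL : TendstoUniformlyOn L g atTop s) (hU : TendstoUniformlyOn U g atTop s)
    (h1 : ∀ᶠ N in atTop, ∀ t ∈ s, L N t ≤ A N t)
    (h2 : ∀ᶠ N in atTop, ∀ t ∈ s, A N t ≤ U N t) :
    TendstoUniformlyOn A g atTop s := by
  rw [Metric.tendstoUniformlyOn_iff] at hL hU ⊢
  intro ε hε
  filter_upwards [hL ε hε, hU ε hε, h1, h2] with N hl hu e1 e2 t ht
  have l1 := hl t ht; have u1 := hu t ht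
  rw [Real.dist_eq] at l1 u1 ⊢
  have := e1 t ht; have := e2 t ht
  rw [abs_sub_lt_iff] at l1 u1 ⊢
  constructor <;> linarith [l1.1, l1.2, u1.1, u1.2]

lemma tuo_const_mul {F : ℕ → ℝ → ℝ} {f c : ℝ → ℝ} {s : Set ℝ} {C : ℝ}
    (hF : TendstoUniformlyOn F f atTop s) (hc : ∀ t ∈ s, |c t| ≤ C) :
    TendstoUniformlyOn (fun N t => c t * F N t) (fun t => c t * f t) atTop s := by
  rw [Metric.tendstoUniformlyOn_iff] at hF ⊢
  intro ε hε
  rcases s.eq_empty_or_nonempty with rfl | ⟨x, hx⟩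
  · filter_upwards with N t ht; exact absurd ht (by simp)
  have hC : (0:ℝ) < C + 1 := by
    have := (abs_nonneg (c x)).trans (hc x hx); linarith
  filter_upwards [hF (ε / (C + 1)) (by positivity)] with N h t ht
  have e := h t ht
  rw [Real.dist_eq] at e ⊢
  calc |c t * f t - c t * F N t| = |c t| * |f t - F N t| := by
        rw [← abs_mul]; ring_nf
    _ ≤ (C + 1) * |f t - F N t| :=
        mul_le_mul_of_nonneg_right ((hc t ht).trans (by linarith)) (abs_nonneg _)
    _ < (C + 1) * (ε / (C + 1)) := by
        exact mul_lt_mul_of_pos_left e hC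
    _ = ε := by field_simp


/- ============ basic moment lemmas ============ -/
section Basic

def Spart (ℓ : ℕ) (u : ℕ → ℝ → ℝ) (j N : ℕ) (t : ℝ) : ℝ :=
  ∑ n ∈ Finset.range N, if ℓ + 1 ≤ n then (n : ℝ) ^ j * u n t else 0

variable {ℓ k : ℕ} {T : ℝ} {u : ℕ → ℝ → ℝ}

lemma term_nonneg (hu : IsLargeSolution ℓ T u) {t : ℝ} (ht : t ∈ Set.Icc (0:ℝ) T)
    (j n : ℕ) : 0 ≤ if ℓ + 1 ≤ n then (n:ℝ)^j * u n t else 0 := by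
  split
  · exact mul_nonneg (by positivity) (hu.mem n (by omega) t ht).1
  · exact le_refl _

lemma spart_nonneg (hu : IsLargeSolution ℓ T u) {t : ℝ} (ht : t ∈ Set.Icc (0:ℝ) T)
    (j N : ℕ) : 0 ≤ Spart ℓ u j N t :=
  Finset.sum_nonneg fun n _ => term_nonneg hu ht j n

lemma spart_mono (hu : IsLargeSolution ℓ T u) {t : ℝ} (ht : t ∈ Set.Icc (0:ℝ) T)
    (j : ℕ) : Monotone fun N => Spart ℓ u j N t := fun a b hab =>
  Finset.sum_le_sum_of_subset_of_nonneg (Finset.range_subset_range.2 hab)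
    (fun n _ _ => term_nonneg hu ht j n)

def Hmom (ℓ : ℕ) (T : ℝ) (u : ℕ → ℝ → ℝ) : Prop := ∀ j : ℕ, TendstoUniformlyOn
      (fun N t => ∑ n ∈ Finset.range N,
        if ℓ + 1 ≤ n then (n : ℝ) ^ j * u n t else 0)
      (largeMoment ℓ u j) atTop (Set.Icc 0 T)

variable {ℓT : ℕ}

lemma spart_tendsto (hmom : Hmom ℓ T u) {t : ℝ} (ht : t ∈ Set.Icc (0:ℝ) T) (j : ℕ) :
    Tendsto (fun N => Spart ℓ u j N t) atTop (𝓝 (largeMoment ℓ u j t)) :=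
  (hmom j).tendsto_at ht

lemma spart_le (hmom : Hmom ℓ T u) (hu : IsLargeSolution ℓ T u) {t : ℝ} (ht : t ∈ Set.Icc (0:ℝ) T)
    (j N : ℕ) : Spart ℓ u j N t ≤ largeMoment ℓ u j t :=
  Monotone.ge_of_tendsto (spart_mono hu ht j) (spart_tendsto hmom ht j) N

lemma moment_nonneg (hmom : Hmom ℓ T u) (hu : IsLargeSolution ℓ T u) {t : ℝ} (ht : t ∈ Set.Icc (0:ℝ) T)
    (j : ℕ) : 0 ≤ largeMoment ℓ u j t :=
  (spart_nonneg hu ht j 0).trans (spart_le hmom hu ht j 0)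

lemma moment_summable (hmom : Hmom ℓ T u) (hu : IsLargeSolution ℓ T u) {t : ℝ} (ht : t ∈ Set.Icc (0:ℝ) T)
    (j : ℕ) : Summable (fun n => if ℓ + 1 ≤ n then (n:ℝ)^j * u n t else 0) :=
  summable_of_sum_range_le (term_nonneg hu ht j) (spart_le hmom hu ht j)

lemma u_continuousOn (hu : IsLargeSolution ℓ T u) {n : ℕ} (hn : ℓ < n) :
    ContinuousOn (u n) (Set.Icc 0 T) := (hu.contDiff n hn).continuousOn

lemma spart_continuousOn (hu : IsLargeSolution ℓ T u) (j N : ℕ) :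
    ContinuousOn (fun t => Spart ℓ u j N t) (Set.Icc 0 T) := by
  apply continuousOn_finset_sum
  intro n _
  by_cases hn : ℓ + 1 ≤ n
  · simp only [hn, if_true]
    exact continuousOn_const.mul (u_continuousOn hu (by omega))
  · simp only [hn, if_false]
    exact continuousOn_const

lemma moment_continuousOn (hmom : Hmom ℓ T u) (hu : IsLargeSolution ℓ T u) (j : ℕ) :
    ContinuousOn (largeMoment ℓ u j) (Set.Icc 0 T) :=
  (hmom j).continuousOn (Eventually.of_forall fun N => spart_continuousOn hu j N).frequently

lemma moment_bound (hmom : Hmom ℓ T u) (hu : IsLargeSolution ℓ T u) (hT : 0 < T) (j : ℕ) :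
    ∃ C : ℝ, 0 ≤ C ∧ (∀ t ∈ Set.Icc (0:ℝ) T, |largeMoment ℓ u j t| ≤ C) ∧
      (∀ N, ∀ t ∈ Set.Icc (0:ℝ) T, |Spart ℓ u j N t| ≤ C) := by
  obtain ⟨C, hC⟩ := (isCompact_Icc (a := (0:ℝ)) (b := T)).exists_bound_of_continuousOn
    (moment_continuousOn hmom hu j)
  refine ⟨C, ?_, fun t ht => ?_, fun N t ht => ?_⟩
  · exact (norm_nonneg (largeMoment ℓ u j 0)).trans (hC 0 (Set.left_mem_Icc.2 hT.le))
  · rw [← Real.norm_eq_abs]; exact hC t ht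
  · rw [abs_of_nonneg (spart_nonneg hu ht j N)]
    refine (spart_le hmom hu ht j N).trans ((le_abs_self _).trans ?_)
    rw [← Real.norm_eq_abs]; exact hC t ht

lemma moment_init (hu : IsLargeSolution ℓ T u) (hT : 0 < T) (hk : ℓ < k)
    (hinit : ∀ n, ℓ < n → u n 0 = if n = k then 1 else 0) (j : ℕ) :
    largeMoment ℓ u j 0 = (k:ℝ)^j := by
  have : (fun n => if ℓ + 1 ≤ n then (n:ℝ)^j * u n 0 else 0)
      = fun n => if n = k then (k:ℝ)^j else 0 := by
    funext n
    by_cases hn : ℓ + 1 ≤ n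
    · rw [if_pos hn, hinit n (by omega)]
      by_cases hnk : n = k
      · subst hnk; simp
      · simp [hnk]
    · have : n ≠ k := by omega
      simp [hn, this]
  rw [largeMoment, this, tsum_ite_eq]

lemma m1large_eq (t : ℝ) : m1large ℓ u t = largeMoment ℓ u 1 t := by
  unfold m1large largeMoment
  congr 1; funext n; rw [pow_one]

end Basic
/- ============ convolution reindexing and square expansion ============ -/
section Conv

variable {ℓ : ℕ} {T : ℝ} {u : ℕ → ℝ → ℝ}

def Pfin (ℓ m : ℕ) : Finset ℕ := (Finset.range m).filter (fun n => ℓ + 1 ≤ n)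

def Qfin (ℓ N : ℕ) : Finset (ℕ × ℕ) :=
  ((Finset.range N) ×ˢ (Finset.range N)).filter
    (fun q => ℓ + 1 ≤ q.1 ∧ ℓ + 1 ≤ q.2 ∧ q.1 + q.2 ≤ N - 1 + ℓ)

def convPart (ℓ : ℕ) (u : ℕ → ℝ → ℝ) (j N : ℕ) (t : ℝ) : ℝ :=
  ∑ n ∈ Pfin ℓ N, (n:ℝ)^j *
    ∑ i ∈ Finset.Icc (ℓ+1) (n-1), (i:ℝ) * ((n + ℓ - i : ℕ):ℝ) * u i t * u (n + ℓ - i) t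

def qterm (ℓ : ℕ) (u : ℕ → ℝ → ℝ) (j : ℕ) (t : ℝ) (q : ℕ × ℕ) : ℝ :=
  ((q.1 + q.2 - ℓ : ℕ):ℝ)^j * (q.1:ℝ) * (q.2:ℝ) * u q.1 t * u q.2 t

lemma conv_reindex (j N : ℕ) (t : ℝ) :
    convPart ℓ u j N t = ∑ q ∈ Qfin ℓ N, qterm ℓ u j t q := by
  unfold convPart Qfin qterm
  simp only [Finset.mul_sum]
  rw [Finset.sum_sigma']
  refine Finset.sum_nbij' (fun a => (a.2, a.1 + ℓ - a.2)) (fun q => ⟨q.1 + q.2 - ℓ, q.1⟩)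
    ?_ ?_ ?_ ?_ ?_
  · rintro ⟨n, i⟩ h
    simp only [Finset.mem_sigma, Pfin, Finset.mem_filter, Finset.mem_range, Finset.mem_Icc,
      Finset.mem_product] at h ⊢
    omega
  · rintro ⟨i, p⟩ h
    simp only [Finset.mem_sigma, Pfin, Finset.mem_filter, Finset.mem_range, Finset.mem_Icc,
      Finset.mem_product] at h ⊢
    omega
  · rintro ⟨n, i⟩ h
    simp only [Finset.mem_sigma, Pfin, Finset.mem_filter, Finset.mem_range, Finset.mem_Icc] at h
    have h1 : i + (n + ℓ - i) - ℓ = n := by omega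
    have h2 : n + ℓ - (n + ℓ - i) = i := by omega
    simp [h1]
  · rintro ⟨i, p⟩ h
    simp only [Pfin, Finset.mem_filter, Finset.mem_range, Finset.mem_product] at h
    have h1 : i + p - ℓ + ℓ - i = p := by omega
    simp [h1]
  · rintro ⟨n, i⟩ h
    simp only [Finset.mem_sigma, Pfin, Finset.mem_filter, Finset.mem_range, Finset.mem_Icc] at h
    have h1 : i + (n + ℓ - i) - ℓ = n := by omega
    rw [h1]; ring

lemma qfin_subset_sq (N : ℕ) : Qfin ℓ N ⊆ (Pfin ℓ N) ×ˢ (Pfin ℓ N) := by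
  intro q hq
  simp only [Qfin, Pfin, Finset.mem_filter, Finset.mem_product, Finset.mem_range] at hq ⊢
  tauto

lemma sq_subset_qfin {m N : ℕ} (h : m + m ≤ N + 1 + ℓ) (hm : m ≤ N) :
    (Pfin ℓ m) ×ˢ (Pfin ℓ m) ⊆ Qfin ℓ N := by
  intro q hq
  simp only [Qfin, Pfin, Finset.mem_filter, Finset.mem_product, Finset.mem_range] at hq ⊢
  omega

lemma qterm_nonneg (hu : IsLargeSolution ℓ T u) {t : ℝ} (ht : t ∈ Set.Icc (0:ℝ) T)
    (j : ℕ) {q : ℕ × ℕ} (h1 : ℓ + 1 ≤ q.1) (h2 : ℓ + 1 ≤ q.2) :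
    0 ≤ qterm ℓ u j t q := by
  unfold qterm
  have := (hu.mem q.1 (by omega) t ht).1
  have := (hu.mem q.2 (by omega) t ht).1
  positivity

/-- square sum -/
def sqPart (ℓ : ℕ) (u : ℕ → ℝ → ℝ) (j m : ℕ) (t : ℝ) : ℝ :=
  ∑ q ∈ (Pfin ℓ m) ×ˢ (Pfin ℓ m), qterm ℓ u j t q

lemma spart_eq_pfin (j m : ℕ) (t : ℝ) :
    Spart ℓ u j m t = ∑ n ∈ Pfin ℓ m, (n:ℝ)^j * u n t := by
  rw [Spart, Pfin, Finset.sum_filter]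

lemma sq_expand_two (m : ℕ) (t : ℝ) :
    sqPart ℓ u 2 m t =
      Spart ℓ u 3 m t * Spart ℓ u 1 m t + Spart ℓ u 1 m t * Spart ℓ u 3 m t
      + (ℓ:ℝ)^2 * (Spart ℓ u 1 m t * Spart ℓ u 1 m t)
      + 2 * (Spart ℓ u 2 m t * Spart ℓ u 2 m t)
      - 2 * ℓ * (Spart ℓ u 2 m t * Spart ℓ u 1 m t)
      - 2 * ℓ * (Spart ℓ u 1 m t * Spart ℓ u 2 m t) := by
  rw [sqPart, Finset.sum_product]
  simp only [spart_eq_pfin, Finset.sum_mul_sum, Finset.sum_mul, Finset.mul_sum,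
    ← Finset.sum_add_distrib, ← Finset.sum_sub_distrib]
  refine Finset.sum_congr rfl fun i hi => Finset.sum_congr rfl fun p hp => ?_
  simp only [Pfin, Finset.mem_filter, Finset.mem_range] at hi hp
  simp only [qterm]
  have hcast : ((i + p - ℓ : ℕ):ℝ) = (i:ℝ) + (p:ℝ) - (ℓ:ℝ) := by
    have h : ℓ ≤ i + p := by omega
    push_cast [h]; ring
  rw [hcast]; ring

lemma sq_expand_one (m : ℕ) (t : ℝ) :
    sqPart ℓ u 1 m t =
      Spart ℓ u 2 m t * Spart ℓ u 1 m t + Spart ℓ u 1 m t * Spart ℓ u 2 m t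
      - (ℓ:ℝ) * (Spart ℓ u 1 m t * Spart ℓ u 1 m t) := by
  rw [sqPart, Finset.sum_product]
  simp only [spart_eq_pfin, Finset.sum_mul_sum, Finset.sum_mul, Finset.mul_sum,
    ← Finset.sum_add_distrib, ← Finset.sum_sub_distrib]
  refine Finset.sum_congr rfl fun i hi => Finset.sum_congr rfl fun p hp => ?_
  simp only [Pfin, Finset.mem_filter, Finset.mem_range] at hi hp
  simp only [qterm]
  have hcast : ((i + p - ℓ : ℕ):ℝ) = (i:ℝ) + (p:ℝ) - (ℓ:ℝ) := by
    have h : ℓ ≤ i + p := by omega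
    push_cast [h]; ring
  rw [hcast]; ring

end Conv
/- ============ uniform convergence of convolution sums ============ -/
section Unif

variable {ℓ k : ℕ} {T : ℝ} {u : ℕ → ℝ → ℝ}

lemma prod_tuo (hmom : Hmom ℓ T u) (hu : IsLargeSolution ℓ T u) (hT : 0 < T) (j1 j2 : ℕ) :
    TendstoUniformlyOn (fun m t => Spart ℓ u j1 m t * Spart ℓ u j2 m t)
      (fun t => largeMoment ℓ u j1 t * largeMoment ℓ u j2 t) atTop (Set.Icc 0 T) := by
  obtain ⟨C1, hC1, hM1, hS1⟩ := moment_bound hmom hu hT j1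
  obtain ⟨C2, hC2, hM2, hS2⟩ := moment_bound hmom hu hT j2
  refine tuo_mul (C := max C1 C2) (le_max_left _ _ |>.trans' hC1) (hmom j1) (hmom j2) ?_ ?_
  · exact fun N t ht => (hS1 N t ht).trans (le_max_left _ _)
  · exact fun t ht => (hM2 t ht).trans (le_max_right _ _)

def Gconv1 (ℓ : ℕ) (u : ℕ → ℝ → ℝ) (t : ℝ) : ℝ :=
  largeMoment ℓ u 2 t * largeMoment ℓ u 1 t + largeMoment ℓ u 1 t * largeMoment ℓ u 2 t
  - (ℓ:ℝ) * (largeMoment ℓ u 1 t * largeMoment ℓ u 1 t)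

def Gconv2 (ℓ : ℕ) (u : ℕ → ℝ → ℝ) (t : ℝ) : ℝ :=
  largeMoment ℓ u 3 t * largeMoment ℓ u 1 t + largeMoment ℓ u 1 t * largeMoment ℓ u 3 t
  + (ℓ:ℝ)^2 * (largeMoment ℓ u 1 t * largeMoment ℓ u 1 t)
  + 2 * (largeMoment ℓ u 2 t * largeMoment ℓ u 2 t)
  - 2 * ℓ * (largeMoment ℓ u 2 t * largeMoment ℓ u 1 t)
  - 2 * ℓ * (largeMoment ℓ u 1 t * largeMoment ℓ u 2 t)

lemma const_tuo {F : ℕ → ℝ → ℝ} {f : ℝ → ℝ} (c : ℝ)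
    (h : TendstoUniformlyOn F f atTop (Set.Icc (0:ℝ) T)) :
    TendstoUniformlyOn (fun N t => c * F N t) (fun t => c * f t) atTop (Set.Icc (0:ℝ) T) :=
  tuo_const_mul (C := |c|) h (fun _ _ => le_refl _)

lemma sq_tuo1 (hmom : Hmom ℓ T u) (hu : IsLargeSolution ℓ T u) (hT : 0 < T) :
    TendstoUniformlyOn (fun m t => sqPart ℓ u 1 m t) (Gconv1 ℓ u) atTop (Set.Icc 0 T) := by
  have e : (fun m t => sqPart ℓ u 1 m t) = fun m t =>
      Spart ℓ u 2 m t * Spart ℓ u 1 m t + Spart ℓ u 1 m t * Spart ℓ u 2 m t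
      - (ℓ:ℝ) * (Spart ℓ u 1 m t * Spart ℓ u 1 m t) := by
    funext m t; exact sq_expand_one m t
  rw [e]
  exact ((prod_tuo hmom hu hT 2 1).add (prod_tuo hmom hu hT 1 2)).sub
    (const_tuo _ (prod_tuo hmom hu hT 1 1))

lemma sq_tuo2 (hmom : Hmom ℓ T u) (hu : IsLargeSolution ℓ T u) (hT : 0 < T) :
    TendstoUniformlyOn (fun m t => sqPart ℓ u 2 m t) (Gconv2 ℓ u) atTop (Set.Icc 0 T) := by
  have e : (fun m t => sqPart ℓ u 2 m t) = fun m t =>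
      Spart ℓ u 3 m t * Spart ℓ u 1 m t + Spart ℓ u 1 m t * Spart ℓ u 3 m t
      + (ℓ:ℝ)^2 * (Spart ℓ u 1 m t * Spart ℓ u 1 m t)
      + 2 * (Spart ℓ u 2 m t * Spart ℓ u 2 m t)
      - 2 * ℓ * (Spart ℓ u 2 m t * Spart ℓ u 1 m t)
      - 2 * ℓ * (Spart ℓ u 1 m t * Spart ℓ u 2 m t) := by
    funext m t; exact sq_expand_two m t
  rw [e]
  exact (((((prod_tuo hmom hu hT 3 1).add (prod_tuo hmom hu hT 1 3)).add
    (const_tuo _ (prod_tuo hmom hu hT 1 1))).add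
    (const_tuo _ (prod_tuo hmom hu hT 2 2))).sub
    (const_tuo _ (prod_tuo hmom hu hT 2 1))).sub
    (const_tuo _ (prod_tuo hmom hu hT 1 2))

lemma mf_tendsto : Tendsto (fun N => (N + ℓ + 1) / 2) atTop atTop := by
  apply tendsto_atTop_atTop.2
  intro b
  exact ⟨2 * b, fun a ha => by omega⟩

lemma conv_between (hu : IsLargeSolution ℓ T u) (j : ℕ) :
    ∀ᶠ N in atTop, ∀ t ∈ Set.Icc (0:ℝ) T,
      sqPart ℓ u j ((N + ℓ + 1) / 2) t ≤ convPart ℓ u j N t ∧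
      convPart ℓ u j N t ≤ sqPart ℓ u j N t := by
  filter_upwards [eventually_ge_atTop (ℓ + 1)] with N hN t ht
  rw [conv_reindex]
  constructor
  · apply Finset.sum_le_sum_of_subset_of_nonneg
      (sq_subset_qfin (by omega) (by omega))
    intro q hq _
    simp only [Qfin, Finset.mem_filter] at hq
    exact qterm_nonneg hu ht j hq.2.1 hq.2.2.1
  · apply Finset.sum_le_sum_of_subset_of_nonneg (qfin_subset_sq N)
    intro q hq _
    simp only [Pfin, Finset.mem_product, Finset.mem_filter] at hq
    exact qterm_nonneg hu ht j hq.1.2 hq.2.2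

lemma conv_tuo1 (hmom : Hmom ℓ T u) (hu : IsLargeSolution ℓ T u) (hT : 0 < T) :
    TendstoUniformlyOn (fun N t => convPart ℓ u 1 N t) (Gconv1 ℓ u) atTop (Set.Icc 0 T) := by
  refine tuo_squeeze (tuo_comp_mono (sq_tuo1 hmom hu hT) (mf_tendsto (ℓ := ℓ))) (sq_tuo1 hmom hu hT)
    ?_ ?_
  · filter_upwards [conv_between hu 1] with N h t ht using (h t ht).1
  · filter_upwards [conv_between hu 1] with N h t ht using (h t ht).2

lemma conv_tuo2 (hmom : Hmom ℓ T u) (hu : IsLargeSolution ℓ T u) (hT : 0 < T) :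
    TendstoUniformlyOn (fun N t => convPart ℓ u 2 N t) (Gconv2 ℓ u) atTop (Set.Icc 0 T) := by
  refine tuo_squeeze (tuo_comp_mono (sq_tuo2 hmom hu hT) (mf_tendsto (ℓ := ℓ))) (sq_tuo2 hmom hu hT)
    ?_ ?_
  · filter_upwards [conv_between hu 2] with N h t ht using (h t ht).1
  · filter_upwards [conv_between hu 2] with N h t ht using (h t ht).2

end Unif
/- ============ derivative of partial sums, uniform limit ============ -/
section Deriv

variable {ℓ k : ℕ} {T : ℝ} {u : ℕ → ℝ → ℝ}

def Dpart (ℓ : ℕ) (u : ℕ → ℝ → ℝ) (j N : ℕ) (t : ℝ) : ℝ :=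
  ∑ n ∈ Finset.range N, if ℓ + 1 ≤ n then (n:ℝ)^j * largeRHS ℓ u n t else 0

lemma dpart_eq (j N : ℕ) (t : ℝ) :
    Dpart ℓ u j N t = (1 / (m1large ℓ u t)^2) * convPart ℓ u j N t
      - (2 / m1large ℓ u t) * Spart ℓ u (j+1) N t := by
  rw [Dpart, ← Finset.sum_filter, spart_eq_pfin, convPart]
  unfold Pfin
  rw [Finset.mul_sum, Finset.mul_sum, ← Finset.sum_sub_distrib]
  apply Finset.sum_congr rfl
  intro n hn
  rw [largeRHS]
  ring

lemma spart_hasDerivAt (hu : IsLargeSolution ℓ T u) (j N : ℕ) {t : ℝ}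
    (ht : t ∈ Set.Ioo (0:ℝ) T) :
    HasDerivAt (fun s => Spart ℓ u j N s) (Dpart ℓ u j N t) t := by
  have hmem : Set.Icc (0:ℝ) T ∈ 𝓝 t := Icc_mem_nhds ht.1 ht.2
  apply HasDerivAt.fun_sum
  intro n _
  by_cases hn : ℓ + 1 ≤ n
  · simp only [hn, if_true]
    exact (((hu.ode n (by omega) t (Set.mem_Icc.2 ⟨ht.1.le, ht.2.le⟩)).hasDerivAt
      hmem).const_mul ((n:ℝ)^j))
  · simp only [hn, if_false]
    exact hasDerivAt_const t 0

/-- uniform convergence of the derivative sums on a subinterval where `m₁ ≥ c > 0`. -/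
lemma dpart_tuo (hmom : Hmom ℓ T u) (hu : IsLargeSolution ℓ T u) (hT : 0 < T)
    {b c : ℝ} (hb : b ≤ T) (hc : 0 < c)
    (hmc : ∀ t ∈ Set.Icc (0:ℝ) b, c ≤ m1large ℓ u t)
    {j : ℕ} (hj : j = 1 ∨ j = 2) (G : ℝ → ℝ)
    (hG : G = if j = 1 then Gconv1 ℓ u else Gconv2 ℓ u) :
    TendstoUniformlyOn (fun N t => Dpart ℓ u j N t)
      (fun t => (1 / (m1large ℓ u t)^2) * G t - (2 / m1large ℓ u t) * largeMoment ℓ u (j+1) t)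
      atTop (Set.Icc 0 b) := by
  have hsub : Set.Icc (0:ℝ) b ⊆ Set.Icc (0:ℝ) T := Set.Icc_subset_Icc le_rfl hb
  have e : (fun N t => Dpart ℓ u j N t) = fun N t =>
      (1 / (m1large ℓ u t)^2) * convPart ℓ u j N t
      - (2 / m1large ℓ u t) * Spart ℓ u (j+1) N t := by
    funext N t; exact dpart_eq j N t
  rw [e]
  have hconv : TendstoUniformlyOn (fun N t => convPart ℓ u j N t) G atTop (Set.Icc 0 b) := by
    rcases hj with rfl | rfl
    · simpa [hG] using (conv_tuo1 hmom hu hT).mono hsub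
    · simpa [hG] using (conv_tuo2 hmom hu hT).mono hsub
  have h1 : TendstoUniformlyOn (fun N t => (1 / (m1large ℓ u t)^2) * convPart ℓ u j N t)
      (fun t => (1 / (m1large ℓ u t)^2) * G t) atTop (Set.Icc 0 b) := by
    apply tuo_const_mul (C := 1 / c^2) hconv
    intro t ht
    have h := hmc t ht
    rw [abs_of_nonneg (div_nonneg zero_le_one (sq_nonneg _))]
    exact div_le_div_of_nonneg_left zero_le_one (by positivity) (pow_le_pow_left₀ hc.le h 2)
  have h2 : TendstoUniformlyOn (fun N t => (2 / m1large ℓ u t) * Spart ℓ u (j+1) N t)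
      (fun t => (2 / m1large ℓ u t) * largeMoment ℓ u (j+1) t) atTop (Set.Icc 0 b) := by
    apply tuo_const_mul (C := 2 / c) ((hmom (j+1)).mono hsub)
    intro t ht
    have h := hmc t ht
    rw [abs_of_nonneg (div_nonneg (by norm_num) ((hc.trans_le h).le))]
    exact div_le_div_of_nonneg_left (by norm_num) hc h
  exact h1.sub h2

end Deriv
/- ============ moment ODEs ============ -/
section MomODE

variable {ℓ k : ℕ} {T : ℝ} {u : ℕ → ℝ → ℝ}

lemma moment_hasDerivAt_one (hmom : Hmom ℓ T u) (hu : IsLargeSolution ℓ T u) (hT : 0 < T)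
    {b c : ℝ} (hbT : b ≤ T) (hc : 0 < c)
    (hmc : ∀ t ∈ Set.Icc (0:ℝ) b, c ≤ m1large ℓ u t) :
    ∀ t ∈ Set.Ioo (0:ℝ) b, HasDerivAt (largeMoment ℓ u 1) (-(ℓ:ℝ)) t := by
  intro t ht
  have hIoo : Set.Ioo (0:ℝ) b ⊆ Set.Ioo (0:ℝ) T := Set.Ioo_subset_Ioo le_rfl hbT
  have hIcc : Set.Ioo (0:ℝ) b ⊆ Set.Icc (0:ℝ) b := Set.Ioo_subset_Icc_self
  have hmain := hasDerivAt_of_tendstoUniformlyOn (isOpen_Ioo (a := (0:ℝ)) (b := b))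
    ((dpart_tuo hmom hu hT hbT hc hmc (Or.inl rfl) (Gconv1 ℓ u) (by simp)).mono hIcc)
    (Eventually.of_forall fun N x hx => spart_hasDerivAt hu 1 N (hIoo hx))
    (fun x hx => (hmom 1).tendsto_at
      ((Set.Icc_subset_Icc le_rfl hbT) (hIcc hx))) ht
  have hm := hmc t (hIcc ht)
  have hm0 : m1large ℓ u t ≠ 0 := (hc.trans_le hm).ne'
  have : (1 / (m1large ℓ u t)^2) * Gconv1 ℓ u t
      - (2 / m1large ℓ u t) * largeMoment ℓ u 2 t = -(ℓ:ℝ) := by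
    rw [Gconv1, ← m1large_eq]
    field_simp
    ring
  rwa [this] at hmain

lemma moment_hasDerivAt_two (hmom : Hmom ℓ T u) (hu : IsLargeSolution ℓ T u) (hT : 0 < T)
    {b c : ℝ} (hbT : b ≤ T) (hc : 0 < c)
    (hmc : ∀ t ∈ Set.Icc (0:ℝ) b, c ≤ m1large ℓ u t) :
    ∀ t ∈ Set.Ioo (0:ℝ) b, HasDerivAt (largeMoment ℓ u 2)
      ((ℓ:ℝ)^2 - 4*(ℓ:ℝ)*(largeMoment ℓ u 2 t / m1large ℓ u t)
        + 2*(largeMoment ℓ u 2 t / m1large ℓ u t)^2) t := by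
  intro t ht
  have hIoo : Set.Ioo (0:ℝ) b ⊆ Set.Ioo (0:ℝ) T := Set.Ioo_subset_Ioo le_rfl hbT
  have hIcc : Set.Ioo (0:ℝ) b ⊆ Set.Icc (0:ℝ) b := Set.Ioo_subset_Icc_self
  have hmain := hasDerivAt_of_tendstoUniformlyOn (isOpen_Ioo (a := (0:ℝ)) (b := b))
    ((dpart_tuo hmom hu hT hbT hc hmc (Or.inr rfl) (Gconv2 ℓ u) (by simp)).mono hIcc)
    (Eventually.of_forall fun N x hx => spart_hasDerivAt hu 2 N (hIoo hx))
    (fun x hx => (hmom 2).tendsto_at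
      ((Set.Icc_subset_Icc le_rfl hbT) (hIcc hx))) ht
  have hm := hmc t (hIcc ht)
  have hm0 : m1large ℓ u t ≠ 0 := (hc.trans_le hm).ne'
  have : (1 / (m1large ℓ u t)^2) * Gconv2 ℓ u t
      - (2 / m1large ℓ u t) * largeMoment ℓ u 3 t
      = (ℓ:ℝ)^2 - 4*(ℓ:ℝ)*(largeMoment ℓ u 2 t / m1large ℓ u t)
        + 2*(largeMoment ℓ u 2 t / m1large ℓ u t)^2 := by
    rw [Gconv2, ← m1large_eq]
    field_simp
    ring
  rwa [this] at hmain

lemma m1_linear (hmom : Hmom ℓ T u) (hu : IsLargeSolution ℓ T u) (hT : 0 < T)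
    {b c : ℝ} (hbT : b ≤ T) (hc : 0 < c)
    (hmc : ∀ t ∈ Set.Icc (0:ℝ) b, c ≤ m1large ℓ u t) :
    ∀ t ∈ Set.Icc (0:ℝ) b, largeMoment ℓ u 1 t = largeMoment ℓ u 1 0 - ℓ * t := by
  intro x hx
  rcases eq_or_lt_of_le hx.1 with h0 | hx0
  · rw [← h0]; simp
  have key : ∫ s in (0:ℝ)..x, (-(ℓ:ℝ)) = largeMoment ℓ u 1 x - largeMoment ℓ u 1 0 := by
    apply intervalIntegral.integral_eq_sub_of_hasDeriv_right_of_le hx.1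
      (((moment_continuousOn hmom hu 1).mono
        (Set.Icc_subset_Icc le_rfl (hx.2.trans hbT))))
      (fun t ht => ((moment_hasDerivAt_one hmom hu hT hbT hc hmc t
        (Set.Ioo_subset_Ioo le_rfl hx.2 ht)).hasDerivWithinAt))
      intervalIntegrable_const
  rw [intervalIntegral.integral_const] at key
  simp at key
  linarith

lemma min_pos_on {f : ℝ → ℝ} {b : ℝ} (hb : 0 ≤ b) (hf : ContinuousOn f (Set.Icc 0 b))
    (hpos : ∀ t ∈ Set.Icc (0:ℝ) b, 0 < f t) :
    ∃ c : ℝ, 0 < c ∧ ∀ t ∈ Set.Icc (0:ℝ) b, c ≤ f t := by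
  obtain ⟨x, hx, hmin⟩ := (isCompact_Icc (a := (0:ℝ)) (b := b)).exists_isMinOn
    (Set.nonempty_Icc.2 hb) hf
  exact ⟨f x, hpos x hx, fun t ht => hmin ht⟩

lemma m1_formula (hmom : Hmom ℓ T u) (hu : IsLargeSolution ℓ T u) (hT : 0 < T)
    (hℓ : 1 ≤ ℓ) (hk : ℓ < k)
    (hinit : ∀ n, ℓ < n → u n 0 = if n = k then 1 else 0) :
    ∀ t ∈ Set.Icc (0:ℝ) T, t < (k:ℝ)/(ℓ:ℝ) → largeMoment ℓ u 1 t = k - ℓ * t := by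
  have hM0 : largeMoment ℓ u 1 0 = (k:ℝ) := by
    rw [moment_init hu hT hk hinit 1, pow_one]
  have hcont := moment_continuousOn hmom hu 1
  -- key step: on any `[0,b]` where `M1 > 0`, the formula holds
  have key : ∀ b : ℝ, 0 ≤ b → b ≤ T → (∀ t ∈ Set.Icc (0:ℝ) b, 0 < largeMoment ℓ u 1 t) →
      ∀ t ∈ Set.Icc (0:ℝ) b, largeMoment ℓ u 1 t = k - ℓ * t := by
    intro b hb0 hbT hpos t ht
    obtain ⟨c, hc, hcle⟩ := min_pos_on hb0
      (hcont.mono (Set.Icc_subset_Icc le_rfl hbT)) hpos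
    have hmc : ∀ s ∈ Set.Icc (0:ℝ) b, c ≤ m1large ℓ u s := by
      intro s hs; rw [m1large_eq]; exact hcle s hs
    rw [m1_linear hmom hu hT hbT hc hmc t ht, hM0]
  set Bad : Set ℝ := {t ∈ Set.Icc (0:ℝ) T | largeMoment ℓ u 1 t ≤ 0} with hBad
  rcases Bad.eq_empty_or_nonempty with hemp | hne
  · intro t ht _
    apply key T hT.le le_rfl _ t ht
    intro s hs
    by_contra hcon
    exact (Set.eq_empty_iff_forall_notMem.1 hemp s) ⟨hs, by linarith⟩
  · have hclosed : IsClosed Bad := by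
      have : Bad = Set.Icc 0 T ∩ largeMoment ℓ u 1 ⁻¹' Set.Iic 0 := by
        ext x; simp [hBad, Set.mem_sep_iff]
      rw [this]
      exact ContinuousOn.preimage_isClosed_of_isClosed hcont isClosed_Icc isClosed_Iic
    have hbdd : BddBelow Bad := ⟨0, fun x hx => hx.1.1⟩
    set t₀ := sInf Bad with ht₀
    have ht₀mem : t₀ ∈ Bad := hclosed.csInf_mem hne hbdd
    have ht₀pos : 0 < t₀ := by
      rcases lt_or_eq_of_le ht₀mem.1.1 with h | h
      · exact h
      · exfalso
        have h2 := ht₀mem.2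
        rw [← h, hM0] at h2
        have h3 : (0:ℝ) < k := by
          have : 0 < k := by omega
          exact_mod_cast this
        linarith
    have hposlt : ∀ b : ℝ, 0 ≤ b → b < t₀ → b ≤ T → ∀ t ∈ Set.Icc (0:ℝ) b,
        0 < largeMoment ℓ u 1 t := by
      intro b hb0 hbt₀ hbT t htb
      by_contra hcon
      have : t ∈ Bad := ⟨⟨htb.1, htb.2.trans hbT⟩, by linarith⟩
      have := csInf_le hbdd this
      have := htb.2
      linarith
    have hform : ∀ t, 0 ≤ t → t < t₀ → t ≤ T → largeMoment ℓ u 1 t = k - ℓ * t := by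
      intro t h0 h1 h2
      exact key t h0 h2 (hposlt t h0 h1 h2) t ⟨h0, le_rfl⟩
    -- `t₀ ≥ k/ℓ`
    have ht₀ge : (k:ℝ)/(ℓ:ℝ) ≤ t₀ := by
      by_contra hcon
      push_neg at hcon
      -- limit from the left gives `M1 t₀ = k - ℓ t₀ > 0`, contradiction
      have hlim : largeMoment ℓ u 1 t₀ = k - ℓ * t₀ := by
        have hne' : (𝓝[Set.Ioo (0:ℝ) t₀] t₀).NeBot := by
          rw [← mem_closure_iff_nhdsWithin_neBot, closure_Ioo ht₀pos.ne]
          exact ⟨ht₀pos.le, le_rfl⟩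
        have h1 : Tendsto (largeMoment ℓ u 1) (𝓝[Set.Ioo (0:ℝ) t₀] t₀)
            (𝓝 (largeMoment ℓ u 1 t₀)) :=
          (hcont t₀ ht₀mem.1).mono_left (nhdsWithin_mono _
            (fun x hx => ⟨hx.1.le, hx.2.le.trans ht₀mem.1.2⟩))
        have h2 : Tendsto (fun t => (k:ℝ) - ℓ * t) (𝓝[Set.Ioo (0:ℝ) t₀] t₀)
            (𝓝 ((k:ℝ) - ℓ * t₀)) := by
          apply Tendsto.mono_left _ nhdsWithin_le_nhds
          exact (continuous_const.sub (continuous_const.mul continuous_id)).tendsto t₀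
        have heq : ∀ᶠ s in 𝓝[Set.Ioo (0:ℝ) t₀] t₀,
            largeMoment ℓ u 1 s = (k:ℝ) - ℓ * s := by
          filter_upwards [self_mem_nhdsWithin] with s hs
          exact hform s hs.1.le hs.2 (hs.2.le.trans ht₀mem.1.2)
        exact tendsto_nhds_unique (h1.congr' heq) h2
      have : (0:ℝ) < k - ℓ * t₀ := by
        have hl : (0:ℝ) < ℓ := by exact_mod_cast hℓ
        rw [lt_div_iff₀ hl] at hcon
        nlinarith
      linarith [ht₀mem.2, hlim]
    intro t ht htk
    rcases lt_or_ge t t₀ with h | h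
    · exact hform t ht.1 h ht.2
    · exfalso
      have := ht₀ge.trans h
      linarith

/- ============ the candidate solution ============ -/

def psiF (ℓ k : ℕ) (t : ℝ) : ℝ :=
  ((k : ℝ) - (ℓ : ℝ) * t) * ((k : ℝ) ^ 2 - 2 * (k : ℝ) * (ℓ : ℝ) * t + (ℓ : ℝ) ^ 2 * t) /
    ((k : ℝ) - 2 * (k : ℝ) * t + (ℓ : ℝ) * t)

section Psi

variable {ℓ k : ℕ}

lemma psi_zero (hk : 0 < k) : psiF ℓ k 0 = (k:ℝ)^2 := by
  have hk' : (k:ℝ) ≠ 0 := by positivity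
  rw [psiF]
  field_simp
  ring

lemma psi_hasDerivAt {t : ℝ} (hden : (k:ℝ) - 2*(k:ℝ)*t + (ℓ:ℝ)*t ≠ 0)
    (hm : (k:ℝ) - (ℓ:ℝ)*t ≠ 0) :
    HasDerivAt (psiF ℓ k)
      ((ℓ:ℝ)^2 - 4*(ℓ:ℝ)*(psiF ℓ k t / ((k:ℝ) - (ℓ:ℝ)*t))
        + 2*(psiF ℓ k t / ((k:ℝ) - (ℓ:ℝ)*t))^2) t := by
  have h1 : HasDerivAt (fun s : ℝ => (k:ℝ) - (ℓ:ℝ)*s) (-(ℓ:ℝ)) t := by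
    simpa using (hasDerivAt_const t (k:ℝ)).fun_sub ((hasDerivAt_id t).const_mul (ℓ:ℝ))
  have h2 : HasDerivAt (fun s : ℝ => (k:ℝ)^2 - 2*(k:ℝ)*(ℓ:ℝ)*s + (ℓ:ℝ)^2*s)
      (-(2*(k:ℝ)*(ℓ:ℝ)) + (ℓ:ℝ)^2) t := by
    simpa using ((hasDerivAt_const t ((k:ℝ)^2)).fun_sub
      ((hasDerivAt_id t).const_mul (2*(k:ℝ)*(ℓ:ℝ)))).fun_add ((hasDerivAt_id t).const_mul ((ℓ:ℝ)^2))
  have h3 := h1.fun_mul h2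
  have h4 : HasDerivAt (fun s : ℝ => (k:ℝ) - 2*(k:ℝ)*s + (ℓ:ℝ)*s) (-(2*(k:ℝ)) + (ℓ:ℝ)) t := by
    simpa using ((hasDerivAt_const t (k:ℝ)).fun_sub
      ((hasDerivAt_id t).const_mul (2*(k:ℝ)))).fun_add ((hasDerivAt_id t).const_mul (ℓ:ℝ))
  have h5 := h3.fun_div h4 hden
  refine h5.congr_deriv ?_
  rw [psiF, mul_div_assoc, mul_div_cancel_left₀ _ hm]
  have hq : ((k:ℝ)^2 - 2*(k:ℝ)*(ℓ:ℝ)*t + (ℓ:ℝ)^2*t) / ((k:ℝ) - 2*(k:ℝ)*t + (ℓ:ℝ)*t)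
      * ((k:ℝ) - 2*(k:ℝ)*t + (ℓ:ℝ)*t) = (k:ℝ)^2 - 2*(k:ℝ)*(ℓ:ℝ)*t + (ℓ:ℝ)^2*t :=
    div_mul_cancel₀ _ hden
  rw [div_eq_iff (pow_ne_zero 2 hden)]
  linear_combination (4*(ℓ:ℝ)*((k:ℝ) - 2*(k:ℝ)*t + (ℓ:ℝ)*t)
    - 2*(((k:ℝ)^2 - 2*(k:ℝ)*(ℓ:ℝ)*t + (ℓ:ℝ)^2*t) / ((k:ℝ) - 2*(k:ℝ)*t + (ℓ:ℝ)*t)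
      * ((k:ℝ) - 2*(k:ℝ)*t + (ℓ:ℝ)*t) + ((k:ℝ)^2 - 2*(k:ℝ)*(ℓ:ℝ)*t + (ℓ:ℝ)^2*t))) * hq

lemma psi_continuousOn {a b : ℝ}
    (hden : ∀ t ∈ Set.Icc a b, (k:ℝ) - 2*(k:ℝ)*t + (ℓ:ℝ)*t ≠ 0) :
    ContinuousOn (psiF ℓ k) (Set.Icc a b) := by
  apply ContinuousOn.div
  · fun_prop
  · fun_prop
  · exact hden

end Psi

/- ============ the second-moment formula on subintervals ============ -/
section M2formula

variable {ℓ k : ℕ} {T : ℝ} {u : ℕ → ℝ → ℝ}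

lemma m2_formula_on (hmom : Hmom ℓ T u) (hu : IsLargeSolution ℓ T u) (hT : 0 < T)
    (hℓ : 1 ≤ ℓ) (hk : ℓ < k)
    (hinit : ∀ n, ℓ < n → u n 0 = if n = k then 1 else 0)
    {b : ℝ} (hb0 : 0 < b) (hbT : b ≤ T) (hbs : b < (k:ℝ)/(2*(k:ℝ)-(ℓ:ℝ))) :
    ∀ t ∈ Set.Icc (0:ℝ) b, largeMoment ℓ u 2 t = psiF ℓ k t := by
  have hℓR : (1:ℝ) ≤ (ℓ:ℝ) := by exact_mod_cast hℓ
  have hkR : (ℓ:ℝ) < (k:ℝ) := by exact_mod_cast hk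
  have hk0 : (0:ℝ) < k := by linarith
  have h2kl : (0:ℝ) < 2*(k:ℝ) - ℓ := by linarith
  have hstar_lt : (k:ℝ)/(2*(k:ℝ)-(ℓ:ℝ)) < (k:ℝ)/(ℓ:ℝ) :=
    div_lt_div_of_pos_left hk0 (by linarith) (by linarith)
  have hbkl : b < (k:ℝ)/(ℓ:ℝ) := hbs.trans hstar_lt
  have hlb : (ℓ:ℝ) * b < k := by
    rw [lt_div_iff₀ (by linarith : (0:ℝ) < ℓ)] at hbkl; linarith
  have hm1 : ∀ t ∈ Set.Icc (0:ℝ) b, m1large ℓ u t = (k:ℝ) - ℓ * t := by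
    intro t ht
    rw [m1large_eq]
    exact m1_formula hmom hu hT hℓ hk hinit t ⟨ht.1, ht.2.trans hbT⟩
      (lt_of_le_of_lt ht.2 hbkl)
  set c₁ : ℝ := (k:ℝ) - ℓ * b with hc₁def
  have hc₁ : 0 < c₁ := by rw [hc₁def]; linarith
  have hmc : ∀ t ∈ Set.Icc (0:ℝ) b, c₁ ≤ m1large ℓ u t := by
    intro t ht
    rw [hm1 t ht, hc₁def]
    have := ht.2
    nlinarith [ht.1]
  have hmlow : ∀ t ∈ Set.Icc (0:ℝ) b, c₁ ≤ (k:ℝ) - ℓ * t := by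
    intro t ht
    have := hmc t ht; rwa [hm1 t ht] at this
  have hkb : (2*(k:ℝ)-ℓ) * b < k := by
    rw [lt_div_iff₀ h2kl] at hbs; linarith
  have hden : ∀ t ∈ Set.Icc (0:ℝ) b, 0 < (k:ℝ) - 2*(k:ℝ)*t + (ℓ:ℝ)*t := by
    intro t ht
    nlinarith [ht.1, ht.2]
  -- derivative of M2
  have hM2deriv : ∀ t ∈ Set.Ioo (0:ℝ) b, HasDerivAt (largeMoment ℓ u 2)
      ((ℓ:ℝ)^2 - 4*(ℓ:ℝ)*(largeMoment ℓ u 2 t / ((k:ℝ) - ℓ*t))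
        + 2*(largeMoment ℓ u 2 t / ((k:ℝ) - ℓ*t))^2) t := by
    intro t ht
    have h := moment_hasDerivAt_two hmom hu hT hbT hc₁ hmc t ht
    rwa [hm1 t (Set.Ioo_subset_Icc_self ht)] at h
  -- derivative of psiF
  have hpsider : ∀ t ∈ Set.Ioo (0:ℝ) b, HasDerivAt (psiF ℓ k)
      ((ℓ:ℝ)^2 - 4*(ℓ:ℝ)*(psiF ℓ k t / ((k:ℝ) - ℓ*t))
        + 2*(psiF ℓ k t / ((k:ℝ) - ℓ*t))^2) t := by
    intro t ht
    exact psi_hasDerivAt ((hden t (Set.Ioo_subset_Icc_self ht)).ne')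
      ((hc₁.trans_le (hmlow t (Set.Ioo_subset_Icc_self ht))).ne')
  -- bounds
  obtain ⟨R₁, hR₁0, hRM, _⟩ := moment_bound hmom hu hT 2
  obtain ⟨R₂, hR₂⟩ := (isCompact_Icc (a := (0:ℝ)) (b := b)).exists_bound_of_continuousOn
    (psi_continuousOn (fun t ht => (hden t ht).ne'))
  set R : ℝ := max R₁ R₂ with hRdef
  have hR0 : 0 ≤ R := le_max_of_le_left hR₁0
  have hM2b : ∀ t ∈ Set.Icc (0:ℝ) b, |largeMoment ℓ u 2 t| ≤ R := fun t ht =>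
    (hRM t ⟨ht.1, ht.2.trans hbT⟩).trans (le_max_left _ _)
  have hpsib : ∀ t ∈ Set.Icc (0:ℝ) b, |psiF ℓ k t| ≤ R := fun t ht =>
    (hR₂ t ht).trans (le_max_right _ _)
  set L : ℝ := 4*(ℓ:ℝ)/c₁ + 4*R/c₁^2 with hLdef
  have hL0 : 0 ≤ L := by
    rw [hLdef]; positivity
  set d : ℝ → ℝ := fun t => largeMoment ℓ u 2 t - psiF ℓ k t with hddef
  have hd0 : d 0 = 0 := by
    rw [hddef]
    simp only
    rw [moment_init hu hT hk hinit 2, psi_zero (by omega), sub_self]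
  have hdcont : ContinuousOn d (Set.Icc 0 b) :=
    ((moment_continuousOn hmom hu 2).mono (Set.Icc_subset_Icc le_rfl hbT)).sub
      (psi_continuousOn (fun t ht => (hden t ht).ne'))
  set d' : ℝ → ℝ := fun t =>
    ((ℓ:ℝ)^2 - 4*(ℓ:ℝ)*(largeMoment ℓ u 2 t / ((k:ℝ) - ℓ*t))
        + 2*(largeMoment ℓ u 2 t / ((k:ℝ) - ℓ*t))^2)
    - ((ℓ:ℝ)^2 - 4*(ℓ:ℝ)*(psiF ℓ k t / ((k:ℝ) - ℓ*t))
        + 2*(psiF ℓ k t / ((k:ℝ) - ℓ*t))^2) with hd'def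
  have hdderiv : ∀ x ∈ Set.Ioo (0:ℝ) b, HasDerivAt d (d' x) x := fun x hx =>
    (hM2deriv x hx).sub (hpsider x hx)
  have hdbound : ∀ x ∈ Set.Ioo (0:ℝ) b, ‖d' x‖ ≤ L * ‖d x‖ := by
    intro x hx
    have hxI := Set.Ioo_subset_Icc_self hx
    have hm : c₁ ≤ (k:ℝ) - ℓ*x := hmlow x hxI
    have hm0 : (0:ℝ) < (k:ℝ) - ℓ*x := hc₁.trans_le hm
    set A := largeMoment ℓ u 2 x
    set B := psiF ℓ k x
    set m := (k:ℝ) - ℓ*x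
    have hfactor : d' x = (A - B) * (2*(A+B)/m^2 - 4*(ℓ:ℝ)/m) := by
      rw [hd'def]
      simp only [A, B, m, div_pow]
      ring
    rw [Real.norm_eq_abs, Real.norm_eq_abs, hfactor, abs_mul]
    have hsecond : |2*(A+B)/m^2 - 4*(ℓ:ℝ)/m| ≤ L := by
      have t1 : |2*(A+B)/m^2| ≤ 4*R/c₁^2 := by
        rw [abs_div]
        have hnum : |2*(A+B)| ≤ 4*R := by
          rw [abs_mul]
          have : |A + B| ≤ 2*R := (abs_add_le _ _).trans
            (by linarith [hM2b x hxI, hpsib x hxI])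
          rw [abs_two]
          linarith
        have hden2 : c₁^2 ≤ |m^2| := by
          rw [abs_of_nonneg (sq_nonneg m)]
          exact pow_le_pow_left₀ hc₁.le hm 2
        exact div_le_div₀ (by positivity) hnum (by positivity) hden2
      have t2 : |4*(ℓ:ℝ)/m| ≤ 4*(ℓ:ℝ)/c₁ := by
        rw [abs_div, abs_of_nonneg (by positivity : (0:ℝ) ≤ 4*(ℓ:ℝ)),
          abs_of_pos hm0]
        exact div_le_div₀ (by positivity) le_rfl hc₁ hm
      calc |2*(A+B)/m^2 - 4*(ℓ:ℝ)/m| ≤ |2*(A+B)/m^2| + |4*(ℓ:ℝ)/m| := abs_sub _ _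
        _ ≤ 4*R/c₁^2 + 4*(ℓ:ℝ)/c₁ := add_le_add t1 t2
        _ = L := by rw [hLdef]; ring
    calc |A - B| * |2*(A+B)/m^2 - 4*(ℓ:ℝ)/m| ≤ |A - B| * L :=
          mul_le_mul_of_nonneg_left hsecond (abs_nonneg _)
      _ = L * |A - B| := mul_comm _ _
  -- Gronwall: `d = 0` on `(0, b)`
  have hdzero : ∀ t, 0 < t → t < b → d t = 0 := by
    intro t ht0 htb
    set b' : ℝ := (t + b)/2 with hb'def
    have hb'1 : t < b' := by rw [hb'def]; linarith
    have hb'2 : b' < b := by rw [hb'def]; linarith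
    have key : ∀ ε' ∈ Set.Ioo (0:ℝ) t, ‖d t‖ ≤ ‖d ε'‖ * Real.exp (L * t) := by
      intro ε' hε'
      have hgr := norm_le_gronwallBound_of_norm_deriv_right_le
        (f := d) (f' := d') (δ := ‖d ε'‖) (K := L) (ε := 0) (a := ε') (b := b')
        (hdcont.mono (Set.Icc_subset_Icc hε'.1.le (by linarith)))
        (fun x hx => (hdderiv x ⟨hε'.1.trans_le hx.1, hx.2.trans_le hb'2.le⟩).hasDerivWithinAt)
        le_rfl
        (fun x hx => by
          rw [add_zero]
          exact hdbound x ⟨hε'.1.trans_le hx.1, hx.2.trans_le hb'2.le⟩)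
      have := hgr t ⟨(hε'.2).le, hb'1.le⟩
      rw [gronwallBound_ε0] at this
      refine this.trans ?_
      have h1 : L * (t - ε') ≤ L * t := by nlinarith [hε'.1]
      exact mul_le_mul_of_nonneg_left (Real.exp_le_exp.2 h1) (norm_nonneg _)
    have hNB : (𝓝[Set.Ioo (0:ℝ) t] (0:ℝ)).NeBot := by
      rw [← mem_closure_iff_nhdsWithin_neBot, closure_Ioo ht0.ne]
      exact ⟨le_rfl, ht0.le⟩
    have htends : Tendsto (fun ε' => ‖d ε'‖ * Real.exp (L * t))
        (𝓝[Set.Ioo (0:ℝ) t] (0:ℝ)) (𝓝 (‖d 0‖ * Real.exp (L * t))) := by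
      have hc : Tendsto d (𝓝[Set.Ioo (0:ℝ) t] (0:ℝ)) (𝓝 (d 0)) :=
        (hdcont 0 ⟨le_rfl, hb0.le⟩).mono_left (nhdsWithin_mono _
          (fun x hx => ⟨hx.1.le, hx.2.le.trans htb.le⟩))
      exact (hc.norm.mul_const _)
    rw [hd0, norm_zero, zero_mul] at htends
    have hle : ‖d t‖ ≤ 0 :=
      ge_of_tendsto htends (by filter_upwards [self_mem_nhdsWithin] with ε' hε' using key ε' hε')
    have := norm_nonneg (d t)
    rw [← norm_eq_zero]
    linarith
  -- conclude on all of `[0, b]`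
  intro t ht
  rcases eq_or_lt_of_le ht.1 with h0 | h0
  · rw [← h0]
    rw [moment_init hu hT hk hinit 2, psi_zero (by omega)]
  rcases eq_or_lt_of_le ht.2 with hb' | hb'
  · -- `t = b`: left limit
    subst hb'
    have hNB : (𝓝[Set.Ioo (0:ℝ) t] t).NeBot := by
      rw [← mem_closure_iff_nhdsWithin_neBot, closure_Ioo h0.ne]
      exact ⟨h0.le, le_rfl⟩
    have h1 : Tendsto (largeMoment ℓ u 2) (𝓝[Set.Ioo (0:ℝ) t] t)
        (𝓝 (largeMoment ℓ u 2 t)) :=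
      ((moment_continuousOn hmom hu 2) t ⟨h0.le, hbT⟩).mono_left (nhdsWithin_mono _
        (fun x hx => ⟨hx.1.le, hx.2.le.trans hbT⟩))
    have h2 : Tendsto (psiF ℓ k) (𝓝[Set.Ioo (0:ℝ) t] t) (𝓝 (psiF ℓ k t)) :=
      ((psi_continuousOn (fun s hs => (hden s hs).ne')) t ⟨h0.le, le_rfl⟩).mono_left
        (nhdsWithin_mono _ (fun x hx => ⟨hx.1.le, hx.2.le⟩))
    have heq : ∀ᶠ s in 𝓝[Set.Ioo (0:ℝ) t] t, largeMoment ℓ u 2 s = psiF ℓ k s := by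
      filter_upwards [self_mem_nhdsWithin] with s hs
      have := hdzero s hs.1 hs.2
      rw [hddef] at this
      simpa [sub_eq_zero] using this
    exact tendsto_nhds_unique (h1.congr' heq) h2
  · have := hdzero t h0 hb'
    rw [hddef] at this
    simpa [sub_eq_zero] using this

end M2formula

/-- let `ℓ ≥ 1`, `k > ℓ`, and let `u` be a pre-gelation
large-cluster solution on `[0,T]` with monodisperse `k`-mer initial conditions
`u_n(0) = δ_{n,k}`, all of whose moment series converge uniformly on `[0,T]`.
Then `m₂(t) = (k − ℓt)(k² − 2kℓt + ℓ²t)/(k − 2kt + ℓt)` on `[0,T]`. -/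
theorem second_moment_formula (ℓ k : ℕ) (hℓ : 1 ≤ ℓ) (hk : ℓ < k)
    (T : ℝ) (hT : 0 < T)
    (u : ℕ → ℝ → ℝ) (hu : IsPreGelLargeSolution ℓ T u)
    (hinit : ∀ n, ℓ < n → u n 0 = if n = k then 1 else 0)
    (hmom : ∀ j : ℕ, TendstoUniformlyOn
      (fun N t => ∑ n ∈ Finset.range N,
        if ℓ + 1 ≤ n then (n : ℝ) ^ j * u n t else 0)
      (largeMoment ℓ u j) atTop (Set.Icc 0 T)) :
    ∀ t ∈ Set.Icc (0 : ℝ) T,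
      largeMoment ℓ u 2 t =
        ((k : ℝ) - (ℓ : ℝ) * t) *
          ((k : ℝ) ^ 2 - 2 * (k : ℝ) * (ℓ : ℝ) * t + (ℓ : ℝ) ^ 2 * t) /
          ((k : ℝ) - 2 * (k : ℝ) * t + (ℓ : ℝ) * t) := by
  have hu' := hu.toIsLargeSolution
  have hmom' : Hmom ℓ T u := hmom
  have hℓR : (1:ℝ) ≤ (ℓ:ℝ) := by exact_mod_cast hℓ
  have hkR : (ℓ:ℝ) < (k:ℝ) := by exact_mod_cast hk
  have hk0 : (0:ℝ) < k := by linarith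
  have h2kl : (0:ℝ) < 2*(k:ℝ) - ℓ := by linarith
  set ts : ℝ := (k:ℝ)/(2*(k:ℝ)-(ℓ:ℝ)) with htsdef
  have hts0 : 0 < ts := div_pos hk0 h2kl
  have htseq : (2*(k:ℝ)-ℓ) * ts = k := by
    rw [htsdef]; field_simp
  have hstar_lt : ts < (k:ℝ)/(ℓ:ℝ) :=
    div_lt_div_of_pos_left hk0 (by linarith) (by linarith)
  have hlts : (ℓ:ℝ) * ts < k := by
    rw [lt_div_iff₀ (by linarith : (0:ℝ) < (ℓ:ℝ))] at hstar_lt; linarith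
  -- no blow-up within `[0,T]`: `T < ts`
  have hTts : T < ts := by
    by_contra hcon
    push_neg at hcon
    have hNB : (𝓝[Set.Ioo (0:ℝ) ts] ts).NeBot := by
      rw [← mem_closure_iff_nhdsWithin_neBot, closure_Ioo hts0.ne]
      exact ⟨hts0.le, le_rfl⟩
    have heq : ∀ᶠ s in 𝓝[Set.Ioo (0:ℝ) ts] ts,
        largeMoment ℓ u 2 s = psiF ℓ k s := by
      filter_upwards [self_mem_nhdsWithin] with s hs
      exact m2_formula_on hmom' hu' hT hℓ hk hinit hs.1 (hs.2.le.trans hcon) hs.2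
        s ⟨hs.1.le, le_rfl⟩
    have h1 : Tendsto (largeMoment ℓ u 2) (𝓝[Set.Ioo (0:ℝ) ts] ts)
        (𝓝 (largeMoment ℓ u 2 ts)) :=
      ((moment_continuousOn hmom' hu' 2) ts ⟨hts0.le, hcon⟩).mono_left
        (nhdsWithin_mono _ (fun x hx => ⟨hx.1.le, hx.2.le.trans hcon⟩))
    have hnum : Tendsto (fun s => ((k:ℝ)-(ℓ:ℝ)*s) * ((k:ℝ)^2 - 2*(k:ℝ)*(ℓ:ℝ)*s + (ℓ:ℝ)^2*s))
        (𝓝[Set.Ioo (0:ℝ) ts] ts)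
        (𝓝 (((k:ℝ)-(ℓ:ℝ)*ts) * ((k:ℝ)^2 - 2*(k:ℝ)*(ℓ:ℝ)*ts + (ℓ:ℝ)^2*ts))) := by
      apply Tendsto.mono_left _ nhdsWithin_le_nhds
      exact (Continuous.tendsto (by fun_prop) ts)
    have hnumpos : 0 < ((k:ℝ)-(ℓ:ℝ)*ts) * ((k:ℝ)^2 - 2*(k:ℝ)*(ℓ:ℝ)*ts + (ℓ:ℝ)^2*ts) := by
      have h1' : 0 < (k:ℝ) - ℓ*ts := by linarith
      have h2' : (k:ℝ)^2 - 2*(k:ℝ)*(ℓ:ℝ)*ts + (ℓ:ℝ)^2*ts = (k:ℝ)^2 - (ℓ:ℝ)*((2*(k:ℝ)-ℓ)*ts) := by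
        ring
      have h3' : 0 < (k:ℝ)^2 - 2*(k:ℝ)*(ℓ:ℝ)*ts + (ℓ:ℝ)^2*ts := by
        rw [h2', htseq]
        nlinarith
      exact mul_pos h1' h3'
    have hdent : Tendsto (fun s => (k:ℝ)-2*(k:ℝ)*s+(ℓ:ℝ)*s) (𝓝[Set.Ioo (0:ℝ) ts] ts)
        (𝓝[>] (0:ℝ)) := by
      apply tendsto_nhdsWithin_of_tendsto_nhds_of_eventually_within
      · have hd0 : (k:ℝ)-2*(k:ℝ)*ts+(ℓ:ℝ)*ts = 0 := by linarith [htseq]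
        rw [← hd0]
        exact Tendsto.mono_left (Continuous.tendsto (by fun_prop) ts) nhdsWithin_le_nhds
      · filter_upwards [self_mem_nhdsWithin] with s hs
        have : (2*(k:ℝ)-ℓ) * s < k := by
          calc (2*(k:ℝ)-ℓ) * s < (2*(k:ℝ)-ℓ) * ts := by
                exact mul_lt_mul_of_pos_left hs.2 h2kl
            _ = k := htseq
        simp only [Set.mem_Ioi]
        nlinarith
    have hinv : Tendsto (fun s => ((k:ℝ)-2*(k:ℝ)*s+(ℓ:ℝ)*s)⁻¹)
        (𝓝[Set.Ioo (0:ℝ) ts] ts) atTop := tendsto_inv_nhdsGT_zero.comp hdent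
    have hpsi : Tendsto (psiF ℓ k) (𝓝[Set.Ioo (0:ℝ) ts] ts) atTop := by
      have := Filter.Tendsto.pos_mul_atTop hnumpos hnum hinv
      apply this.congr
      intro s
      rw [psiF, div_eq_mul_inv]
    have hM2top : Tendsto (largeMoment ℓ u 2) (𝓝[Set.Ioo (0:ℝ) ts] ts) atTop :=
      hpsi.congr' (heq.mono fun s hs => hs.symm)
    exact not_tendsto_nhds_of_tendsto_atTop hM2top _ h1
  intro t ht
  rcases eq_or_lt_of_le ht.1 with h0 | _
  · rw [← h0, moment_init hu' hT hk hinit 2]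
    exact (psi_zero (by omega)).symm
  · exact m2_formula_on hmom' hu' hT hℓ hk hinit hT le_rfl hTts t ht
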